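/- In the $[6,3,4]$ MDS code over $GF(4)$ generated by the matrix with rows $(1,0,0,1,1,1)$, $(0,1,0,1,\alpha,\alpha^2)$, $(0,0,1,1,\alpha^2,\alpha)$ (where $\alpha$ is a primitive cube root of unity in $GF(4)$), if two codewords of weight 6 are not scalar multiples of each other, then their sum has Hamming weight 4. -/

import Mathlib

open scoped Classical

/-- Hamming weight of a vector. -/
noncomputable def wt {ι F : Type*} [Fintype ι] [Zero F] (x : ι → F) : ℕ :=
  (Finset.univ.filter (fun i => x i ≠ 0)).card

/-- Minimum distance of a linear code (minimum weight of a nonzero codeword). -/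
noncomputable def minDist {ι F : Type*} [Fintype ι] [Field F]
    (C : Submodule F (ι → F)) : ℕ :=
  sInf {w | ∃ c ∈ C, c ≠ 0 ∧ wt c = w}

inductive F4 | O | I | A | B
deriving DecidableEq

instance : Fintype F4 where
  elems := ⟨↑[F4.O, F4.I, F4.A, F4.B], by decide⟩
  complete := fun x => by cases x <;> decide

namespace F4
def add : F4 → F4 → F4
  | O, x => x | x, O => x
  | I, I => O | I, A => B | I, B => A
  | A, I => B | A, A => O | A, B => I
  | B, I => A | B, A => I | B, B => O
def mul : F4 → F4 → F4
  | O, _ => O | _, O => O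
  | I, x => x | x, I => x
  | A, A => B | A, B => I
  | B, A => I | B, B => A
end F4

def vF (a b d : F4) : Fin 6 → F4 :=
  ![a, b, d, (a.add b).add d, (a.add (b.mul F4.A)).add (d.mul F4.B),
    (a.add (b.mul F4.B)).add (d.mul F4.A)]

set_option maxRecDepth 4000 in
lemma key : ∀ a b d a' b' d' : F4,
    (∀ i : Fin 6, vF a b d i ≠ F4.O) →
    (∀ i : Fin 6, vF a' b' d' i ≠ F4.O) →
    (∀ t : F4, ¬(a' = t.mul a ∧ b' = t.mul b ∧ d' = t.mul d)) →
    (Finset.univ.filter (fun i : Fin 6 => (vF a b d i).add (vF a' b' d' i) ≠ F4.O)).card = 4 := by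
  decide

noncomputable def phi (α : GaloisField 2 2) : F4 → GaloisField 2 2
  | .O => 0 | .I => 1 | .A => α | .B => α + 1

lemma gf_two : (1 : GaloisField 2 2) + 1 = 0 := by
  have h := CharP.cast_eq_zero (GaloisField 2 2) 2
  push_cast at h
  linear_combination h

lemma phi_add (α : GaloisField 2 2) (x y : F4) :
    phi α (x.add y) = phi α x + phi α y := by
  have h2 := gf_two
  cases x <;> cases y <;> simp only [phi, F4.add] <;>
    first
      | ring1
      | linear_combination h2
      | linear_combination -h2
      | linear_combination α * h2
      | linear_combination -α * h2
      | linear_combination (α + 1) * h2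
      | linear_combination -(α + 1) * h2

lemma phi_mul (α : GaloisField 2 2) (hα : α ^ 2 + α + 1 = 0) (x y : F4) :
    phi α (x.mul y) = phi α x * phi α y := by
  have h2 := gf_two
  cases x <;> cases y <;> simp only [phi, F4.mul] <;>
    first
      | ring1
      | linear_combination hα
      | linear_combination -hα
      | linear_combination hα + h2
      | linear_combination hα - h2
      | linear_combination -hα + h2
      | linear_combination -hα - h2
      | linear_combination hα + α * h2
      | linear_combination hα - α * h2
      | linear_combination -hα + α * h2
      | linear_combination -hα - α * h2
      | linear_combination hα + (α + 1) * h2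
      | linear_combination hα - (α + 1) * h2
      | linear_combination -hα + (α + 1) * h2
      | linear_combination -hα - (α + 1) * h2
      | linear_combination 2 * hα + h2
      | linear_combination 2 * hα - h2
      | linear_combination -2 * hα + α * h2
      | linear_combination 2 * hα + α * h2

lemma phi_inj (α : GaloisField 2 2) (hα : α ^ 2 + α + 1 = 0) :
    Function.Injective (phi α) := by
  have h2 := gf_two
  have h10 : (1 : GaloisField 2 2) ≠ 0 := one_ne_zero
  have hα0 : α ≠ 0 := by
    intro h; rw [h] at hα; simp at hα
  have hα1 : α ≠ 1 := by
    intro h; rw [h] at hα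
    apply h10; linear_combination hα - h2
  have hβ0 : α + 1 ≠ 0 := by
    intro h; apply hα1; linear_combination h - h2
  have hβ1 : α + 1 ≠ 1 := by
    intro h; apply hα0; linear_combination h
  have hβα : α + 1 ≠ α := by
    intro h; apply h10; linear_combination h
  intro x y h
  cases x <;> cases y <;> first
    | rfl
    | simp only [phi] at h; first
        | exact absurd h h10
        | exact absurd h.symm h10
        | exact absurd h hα0
        | exact absurd h.symm hα0
        | exact absurd h hα1
        | exact absurd h.symm hα1
        | exact absurd h hβ0
        | exact absurd h.symm hβ0
        | exact absurd h hβ1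
        | exact absurd h.symm hβ1
        | exact absurd h hβα
        | exact absurd h.symm hβα

lemma phi_bij (α : GaloisField 2 2) (hα : α ^ 2 + α + 1 = 0) :
    Function.Bijective (phi α) := by
  refine (Nat.bijective_iff_injective_and_card _).mpr ⟨phi_inj α hα, ?_⟩
  rw [GaloisField.card 2 2 (by norm_num), Nat.card_eq_fintype_card]
  rfl

theorem stmt_5 (α : GaloisField 2 2) (hα : α ^ 2 + α + 1 = 0)
    (c c' : Fin 6 → GaloisField 2 2)
    (hc : c ∈ Submodule.span (GaloisField 2 2)
      ({![1,0,0,1,1,1], ![0,1,0,1,α,α^2], ![0,0,1,1,α^2,α]} :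
        Set (Fin 6 → GaloisField 2 2)))
    (hc' : c' ∈ Submodule.span (GaloisField 2 2)
      ({![1,0,0,1,1,1], ![0,1,0,1,α,α^2], ![0,0,1,1,α^2,α]} :
        Set (Fin 6 → GaloisField 2 2)))
    (hw : wt c = 6) (hw' : wt c' = 6)
    (hns : ∀ t : GaloisField 2 2, c' ≠ t • c) :
    wt (c + c') = 4 := by
  have h2 := gf_two
  -- extract coefficients
  rw [Submodule.mem_span_insert] at hc
  obtain ⟨a, z, hz, rfl⟩ := hc
  rw [Submodule.mem_span_insert] at hz
  obtain ⟨b, w, hww, rfl⟩ := hz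
  rw [Submodule.mem_span_singleton] at hww
  obtain ⟨d, rfl⟩ := hww
  rw [Submodule.mem_span_insert] at hc'
  obtain ⟨a', z', hz', rfl⟩ := hc'
  rw [Submodule.mem_span_insert] at hz'
  obtain ⟨b', w', hww', rfl⟩ := hz'
  rw [Submodule.mem_span_singleton] at hww'
  obtain ⟨d', rfl⟩ := hww'
  set c : Fin 6 → GaloisField 2 2 :=
    a • ![1,0,0,1,1,1] + (b • ![0,1,0,1,α,α^2] + d • ![0,0,1,1,α^2,α]) with hcdef
  set c' : Fin 6 → GaloisField 2 2 :=
    a' • ![1,0,0,1,1,1] + (b' • ![0,1,0,1,α,α^2] + d' • ![0,0,1,1,α^2,α]) with hcdef'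
  -- the equivalence
  let e : F4 ≃ GaloisField 2 2 := Equiv.ofBijective _ (phi_bij α hα)
  set A := e.symm a with hA
  set B := e.symm b with hB
  set D := e.symm d with hD
  set A' := e.symm a' with hA'
  set B' := e.symm b' with hB'
  set D' := e.symm d' with hD'
  have ha : phi α A = a := e.apply_symm_apply a
  have hb : phi α B = b := e.apply_symm_apply b
  have hd : phi α D = d := e.apply_symm_apply d
  have ha' : phi α A' = a' := e.apply_symm_apply a'
  have hb' : phi α B' = b' := e.apply_symm_apply b'
  have hd' : phi α D' = d' := e.apply_symm_apply d'
  have pA : phi α F4.A = α := rfl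
  have pB : phi α F4.B = α + 1 := rfl
  -- coordinates
  have e0 : c (0 : Fin 6) = phi α (vF A B D (0 : Fin 6)) := by
    show a * 1 + (b * 0 + d * 0) = phi α (A)
    simp only [phi_add, phi_mul α hα, ha, hb, hd, pA, pB]
    first
      | ring1
      | linear_combination d * hα - d * (α + 1) * h2
      | linear_combination b * hα - b * (α + 1) * h2
  have e1 : c (1 : Fin 6) = phi α (vF A B D (1 : Fin 6)) := by
    show a * 0 + (b * 1 + d * 0) = phi α (B)
    simp only [phi_add, phi_mul α hα, ha, hb, hd, pA, pB]
    first
      | ring1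
      | linear_combination d * hα - d * (α + 1) * h2
      | linear_combination b * hα - b * (α + 1) * h2
  have e2 : c (2 : Fin 6) = phi α (vF A B D (2 : Fin 6)) := by
    show a * 0 + (b * 0 + d * 1) = phi α (D)
    simp only [phi_add, phi_mul α hα, ha, hb, hd, pA, pB]
    first
      | ring1
      | linear_combination d * hα - d * (α + 1) * h2
      | linear_combination b * hα - b * (α + 1) * h2
  have e3 : c (3 : Fin 6) = phi α (vF A B D (3 : Fin 6)) := by
    show a * 1 + (b * 1 + d * 1) = phi α ((A.add B).add D)
    simp only [phi_add, phi_mul α hα, ha, hb, hd, pA, pB]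
    first
      | ring1
      | linear_combination d * hα - d * (α + 1) * h2
      | linear_combination b * hα - b * (α + 1) * h2
  have e4 : c (4 : Fin 6) = phi α (vF A B D (4 : Fin 6)) := by
    show a * 1 + (b * α + d * α ^ 2) = phi α ((A.add (B.mul F4.A)).add (D.mul F4.B))
    simp only [phi_add, phi_mul α hα, ha, hb, hd, pA, pB]
    first
      | ring1
      | linear_combination d * hα - d * (α + 1) * h2
      | linear_combination b * hα - b * (α + 1) * h2
  have e5 : c (5 : Fin 6) = phi α (vF A B D (5 : Fin 6)) := by
    show a * 1 + (b * α ^ 2 + d * α) = phi α ((A.add (B.mul F4.B)).add (D.mul F4.A))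
    simp only [phi_add, phi_mul α hα, ha, hb, hd, pA, pB]
    first
      | ring1
      | linear_combination d * hα - d * (α + 1) * h2
      | linear_combination b * hα - b * (α + 1) * h2
  have hce : ∀ i, c i = phi α (vF A B D i) := by
    intro i
    fin_cases i
    exacts [e0, e1, e2, e3, e4, e5]
  have e'0 : c' (0 : Fin 6) = phi α (vF A' B' D' (0 : Fin 6)) := by
    show a' * 1 + (b' * 0 + d' * 0) = phi α (A')
    simp only [phi_add, phi_mul α hα, ha', hb', hd', pA, pB]
    first
      | ring1
      | linear_combination d' * hα - d' * (α + 1) * h2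
      | linear_combination b' * hα - b' * (α + 1) * h2
  have e'1 : c' (1 : Fin 6) = phi α (vF A' B' D' (1 : Fin 6)) := by
    show a' * 0 + (b' * 1 + d' * 0) = phi α (B')
    simp only [phi_add, phi_mul α hα, ha', hb', hd', pA, pB]
    first
      | ring1
      | linear_combination d' * hα - d' * (α + 1) * h2
      | linear_combination b' * hα - b' * (α + 1) * h2
  have e'2 : c' (2 : Fin 6) = phi α (vF A' B' D' (2 : Fin 6)) := by
    show a' * 0 + (b' * 0 + d' * 1) = phi α (D')
    simp only [phi_add, phi_mul α hα, ha', hb', hd', pA, pB]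
    first
      | ring1
      | linear_combination d' * hα - d' * (α + 1) * h2
      | linear_combination b' * hα - b' * (α + 1) * h2
  have e'3 : c' (3 : Fin 6) = phi α (vF A' B' D' (3 : Fin 6)) := by
    show a' * 1 + (b' * 1 + d' * 1) = phi α ((A'.add B').add D')
    simp only [phi_add, phi_mul α hα, ha', hb', hd', pA, pB]
    first
      | ring1
      | linear_combination d' * hα - d' * (α + 1) * h2
      | linear_combination b' * hα - b' * (α + 1) * h2
  have e'4 : c' (4 : Fin 6) = phi α (vF A' B' D' (4 : Fin 6)) := by
    show a' * 1 + (b' * α + d' * α ^ 2) = phi α ((A'.add (B'.mul F4.A)).add (D'.mul F4.B))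
    simp only [phi_add, phi_mul α hα, ha', hb', hd', pA, pB]
    first
      | ring1
      | linear_combination d' * hα - d' * (α + 1) * h2
      | linear_combination b' * hα - b' * (α + 1) * h2
  have e'5 : c' (5 : Fin 6) = phi α (vF A' B' D' (5 : Fin 6)) := by
    show a' * 1 + (b' * α ^ 2 + d' * α) = phi α ((A'.add (B'.mul F4.B)).add (D'.mul F4.A))
    simp only [phi_add, phi_mul α hα, ha', hb', hd', pA, pB]
    first
      | ring1
      | linear_combination d' * hα - d' * (α + 1) * h2
      | linear_combination b' * hα - b' * (α + 1) * h2
  have hce' : ∀ i, c' i = phi α (vF A' B' D' i) := by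
    intro i
    fin_cases i
    exacts [e'0, e'1, e'2, e'3, e'4, e'5]
  -- weight 6 means all coordinates nonzero
  unfold wt at hw hw'
  have hall : ∀ i, vF A B D i ≠ F4.O := by
    have h6 := Finset.eq_univ_of_card _ (hw.trans (Fintype.card_fin 6).symm)
    intro i hO
    have hmem : i ∈ Finset.univ.filter (fun i => c i ≠ 0) := by
      rw [h6]; exact Finset.mem_univ i
    have hci : c i ≠ 0 := (Finset.mem_filter.mp hmem).2
    apply hci
    rw [hce i, hO]; rfl
  have hall' : ∀ i, vF A' B' D' i ≠ F4.O := by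
    have h6 := Finset.eq_univ_of_card _ (hw'.trans (Fintype.card_fin 6).symm)
    intro i hO
    have hmem : i ∈ Finset.univ.filter (fun i => c' i ≠ 0) := by
      rw [h6]; exact Finset.mem_univ i
    have hci : c' i ≠ 0 := (Finset.mem_filter.mp hmem).2
    apply hci
    rw [hce' i, hO]; rfl
  -- non-proportionality
  have hTns : ∀ T : F4, ¬(A' = T.mul A ∧ B' = T.mul B ∧ D' = T.mul D) := by
    rintro T ⟨h1, h3, h4⟩
    apply hns (phi α T)
    have e1 : a' = phi α T * a := by rw [← ha', h1, phi_mul α hα, ha]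
    have e2 : b' = phi α T * b := by rw [← hb', h3, phi_mul α hα, hb]
    have e3 : d' = phi α T * d := by rw [← hd', h4, phi_mul α hα, hd]
    rw [hcdef, hcdef', e1, e2, e3]
    rw [smul_add, smul_add, smul_smul, smul_smul, smul_smul]
  have hkey := key A B D A' B' D' hall hall' hTns
  -- conclude
  have heq : (Finset.univ.filter fun i => (c + c') i ≠ 0) =
      (Finset.univ.filter fun i : Fin 6 => (vF A B D i).add (vF A' B' D' i) ≠ F4.O) := by
    apply Finset.filter_congr
    intro i _
    have hsum : (c + c') i = phi α ((vF A B D i).add (vF A' B' D' i)) := by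
      rw [phi_add, Pi.add_apply, hce i, hce' i]
    rw [hsum]
    constructor
    · intro h hO; apply h; rw [hO]; rfl
    · intro h hO
      exact h (phi_inj α hα (by rw [hO]; rfl))
  unfold wt
  rw [heq, Finset.filter_congr_decidable]
  exact hkey
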